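/- Let m, q, p be positive real numbers with m < q, and let f be a real function that is monotone decreasing on the interval [(m−1)/p, (q+1)/p]. Then | Σ_{ℓ ∈ ℤ, m < ℓ < q, ℓ even} f(ℓ/p) − (p/2) ∫_{m/p}^{q/p} f(t) dt | ≤ |f(m/p)| + |f(q/p)|, and likewise | Σ_{ℓ ∈ ℤ, m < ℓ < q, ℓ odd} f(ℓ/p) − (p/2) ∫_{m/p}^{q/p} f(t) dt | ≤ |f(m/p)| + |f(q/p)|. -/

import Mathlib

private lemma small1 {c x y : ℝ} (hc0 : 0 ≤ c) (hc1 : c ≤ 1) (hxy : x ≤ y) (hy : 0 ≤ y) :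
    c * x ≤ y := by
  rcases le_or_gt x 0 with h | h
  · nlinarith
  · nlinarith

private lemma sum_Icc_int (a : ℤ) (n : ℕ) (g : ℝ → ℝ) :
    ∑ k ∈ Finset.Icc a (a + n), g (k : ℝ) = ∑ i ∈ Finset.range (n + 1), g ((a : ℝ) + i) := by
  induction n with
  | zero => simp
  | succ n ih =>
    have h1 : Finset.Icc a (a + (n + 1 : ℕ)) = insert (a + (n + 1 : ℕ)) (Finset.Icc a (a + n)) := by
      ext k; simp only [Finset.mem_Icc, Finset.mem_insert]; omega
    have h2 : (a + (n + 1 : ℕ)) ∉ Finset.Icc a (a + (n : ℕ)) := by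
      simp only [Finset.mem_Icc]; omega
    conv_rhs => rw [Finset.sum_range_succ]
    rw [h1, Finset.sum_insert h2, ih]
    push_cast
    ring_nf

private lemma key_aux (α β : ℝ) (hαβ : α < β) (g : ℝ → ℝ)
    (hg : AntitoneOn g (Set.Icc α β)) :
    |(∑ k ∈ Finset.Ioo ⌊α⌋ ⌈β⌉, g (k : ℝ)) - ∫ t in α..β, g t| ≤ |g α| + |g β| := by
  have hmemα : α ∈ Set.Icc α β := ⟨le_refl _, hαβ.le⟩
  have hmemβ : β ∈ Set.Icc α β := ⟨hαβ.le, le_refl _⟩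
  have hint : IntervalIntegrable g MeasureTheory.volume α β := by
    apply AntitoneOn.intervalIntegrable
    rwa [Set.uIcc_of_le hαβ.le]
  by_cases hemp : ⌈β⌉ ≤ ⌊α⌋ + 1
  · -- no integers strictly between
    have he : Finset.Ioo ⌊α⌋ ⌈β⌉ = ∅ := by
      ext k; simp only [Finset.mem_Ioo, Finset.notMem_empty, iff_false]; omega
    rw [he, Finset.sum_empty, zero_sub, abs_neg]
    have hd1 : β - α ≤ 1 := by
      have h1 : β ≤ (⌈β⌉ : ℝ) := Int.le_ceil β
      have h2 : ((⌊α⌋ : ℤ) : ℝ) ≤ α := Int.floor_le α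
      have h3 : ((⌈β⌉ : ℤ) : ℝ) ≤ (⌊α⌋ : ℝ) + 1 := by exact_mod_cast hemp
      linarith
    have hle : (∫ t in α..β, g t) ≤ (β - α) * g α := by
      have := intervalIntegral.integral_mono_on hαβ.le hint
        (intervalIntegrable_const (c := g α)) (fun x hx => hg hmemα hx hx.1)
      simpa [intervalIntegral.integral_const, smul_eq_mul] using this
    have hge : (β - α) * g β ≤ ∫ t in α..β, g t := by
      have := intervalIntegral.integral_mono_on hαβ.le
        (intervalIntegrable_const (c := g β)) hint (fun x hx => hg hx hmemβ hx.2)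
      simpa [intervalIntegral.integral_const, smul_eq_mul] using this
    rw [abs_le]
    constructor
    · have h := small1 (c := β - α) (x := -g β) (y := |g β|) (by linarith) hd1
        (neg_le_abs _) (abs_nonneg _)
      nlinarith [abs_nonneg (g α)]
    · have h := small1 (c := β - α) (x := g α) (y := |g α|) (by linarith) hd1
        (le_abs_self _) (abs_nonneg _)
      nlinarith [abs_nonneg (g β)]
  · -- at least one integer strictly between
    push_neg at hemp
    set a : ℤ := ⌊α⌋ + 1 with ha
    set b : ℤ := ⌈β⌉ - 1 with hb
    have hab : a ≤ b := by omega
    set n : ℕ := (b - a).toNat with hn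
    have hban : (b : ℝ) = (a : ℝ) + n := by
      have h : (n : ℤ) = b - a := Int.toNat_of_nonneg (by omega)
      have h2 : ((n : ℤ) : ℝ) = ((b - a : ℤ) : ℝ) := by exact_mod_cast congrArg Int.cast h
      push_cast at h2
      linarith
    have hαa : α < (a : ℝ) := by
      have := Int.lt_floor_add_one α; push_cast [ha]; push_cast at this ⊢; linarith
    have haα : (a : ℝ) ≤ α + 1 := by
      have := Int.floor_le α; push_cast [ha]; linarith
    have hbβ : (b : ℝ) < β := by
      have := Int.ceil_lt_add_one β; push_cast [hb]; linarith
    have hβb : β ≤ (b : ℝ) + 1 := by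
      have := Int.le_ceil β; push_cast [hb]; linarith
    have haleb : (a : ℝ) ≤ (b : ℝ) := by exact_mod_cast hab
    have hamem : (a : ℝ) ∈ Set.Icc α β := ⟨hαa.le, le_trans haleb hbβ.le⟩
    have hbmem : (b : ℝ) ∈ Set.Icc α β := ⟨le_trans hαa.le haleb, hbβ.le⟩
    -- sum over the integers
    have hIoo : Finset.Ioo ⌊α⌋ ⌈β⌉ = Finset.Icc a (a + n) := by
      have : (n : ℤ) = b - a := Int.toNat_of_nonneg (by omega)
      ext k; simp only [Finset.mem_Ioo, Finset.mem_Icc]; omega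
    have hS : ∑ k ∈ Finset.Ioo ⌊α⌋ ⌈β⌉, g (k : ℝ) = ∑ i ∈ Finset.range (n + 1), g ((a : ℝ) + i) := by
      rw [hIoo, sum_Icc_int]
    -- antitone on [a, a+n]
    have hg' : AntitoneOn g (Set.Icc (a : ℝ) ((a : ℝ) + n)) := by
      apply hg.mono
      apply Set.Icc_subset_Icc hαa.le
      rw [← hban]; exact hbβ.le
    have h1 : (∫ x in (a : ℝ)..((a : ℝ) + n), g x) ≤ ∑ i ∈ Finset.range n, g ((a : ℝ) + i) :=
      AntitoneOn.integral_le_sum hg'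
    have h2 : (∑ i ∈ Finset.range n, g ((a : ℝ) + (i + 1 : ℕ))) ≤ ∫ x in (a : ℝ)..((a : ℝ) + n), g x :=
      AntitoneOn.sum_le_integral hg'
    -- split the integral
    have hiαa : IntervalIntegrable g MeasureTheory.volume α (a : ℝ) := by
      apply AntitoneOn.intervalIntegrable
      rw [Set.uIcc_of_le hαa.le]
      exact hg.mono (Set.Icc_subset_Icc le_rfl hamem.2)
    have hiab : IntervalIntegrable g MeasureTheory.volume (a : ℝ) (b : ℝ) := by
      apply AntitoneOn.intervalIntegrable
      rw [Set.uIcc_of_le haleb]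
      exact hg.mono (Set.Icc_subset_Icc hamem.1 hbmem.2)
    have hibβ : IntervalIntegrable g MeasureTheory.volume (b : ℝ) β := by
      apply AntitoneOn.intervalIntegrable
      rw [Set.uIcc_of_le hbβ.le]
      exact hg.mono (Set.Icc_subset_Icc hbmem.1 le_rfl)
    have hsplit : (∫ t in α..(a : ℝ), g t) + (∫ t in (a : ℝ)..(b : ℝ), g t)
        + (∫ t in (b : ℝ)..β, g t) = ∫ t in α..β, g t := by
      rw [intervalIntegral.integral_add_adjacent_intervals hiαa hiab,
        intervalIntegral.integral_add_adjacent_intervals (hiαa.trans hiab) hibβ]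
    -- bounds on the edge integrals
    have iαa_le : (∫ t in α..(a : ℝ), g t) ≤ ((a : ℝ) - α) * g α := by
      have := intervalIntegral.integral_mono_on hαa.le hiαa
        (intervalIntegrable_const (c := g α))
        (fun x hx => hg hmemα ⟨hx.1, le_trans hx.2 hamem.2⟩ hx.1)
      simpa [intervalIntegral.integral_const, smul_eq_mul] using this
    have iαa_ge : ((a : ℝ) - α) * g ((a : ℝ)) ≤ ∫ t in α..(a : ℝ), g t := by
      have := intervalIntegral.integral_mono_on hαa.le
        (intervalIntegrable_const (c := g (a : ℝ))) hiαa
        (fun x hx => hg ⟨hx.1, le_trans hx.2 hamem.2⟩ hamem hx.2)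
      simpa [intervalIntegral.integral_const, smul_eq_mul] using this
    have ibβ_le : (∫ t in (b : ℝ)..β, g t) ≤ (β - (b : ℝ)) * g ((b : ℝ)) := by
      have := intervalIntegral.integral_mono_on hbβ.le hibβ
        (intervalIntegrable_const (c := g (b : ℝ)))
        (fun x hx => hg hbmem ⟨le_trans hbmem.1 hx.1, hx.2⟩ hx.1)
      simpa [intervalIntegral.integral_const, smul_eq_mul] using this
    have ibβ_ge : (β - (b : ℝ)) * g β ≤ ∫ t in (b : ℝ)..β, g t := by
      have := intervalIntegral.integral_mono_on hbβ.le
        (intervalIntegrable_const (c := g β)) hibβ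
        (fun x hx => hg ⟨le_trans hbmem.1 hx.1, hx.2⟩ hmemβ hx.2)
      simpa [intervalIntegral.integral_const, smul_eq_mul] using this
    -- sum shape
    have hSa : ∑ i ∈ Finset.range (n + 1), g ((a : ℝ) + i)
        = g (a : ℝ) + ∑ i ∈ Finset.range n, g ((a : ℝ) + (i + 1 : ℕ)) := by
      rw [Finset.sum_range_succ']
      simp only [Nat.cast_add, Nat.cast_one, Nat.cast_zero, add_zero]
      rw [add_comm]
    have hSb : ∑ i ∈ Finset.range (n + 1), g ((a : ℝ) + i)
        = (∑ i ∈ Finset.range n, g ((a : ℝ) + i)) + g ((b : ℝ)) := by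
      rw [Finset.sum_range_succ, hban]
    -- monotonicity facts
    have hgab : g ((b : ℝ)) ≤ g ((a : ℝ)) := hg hamem hbmem haleb
    have hgαa : g ((a : ℝ)) ≤ g α := hg hmemα hamem hαa.le
    have hgbβ : g β ≤ g ((b : ℝ)) := hg hbmem hmemβ hbβ.le
    -- final arithmetic
    have hS1 : (∑ k ∈ Finset.Ioo ⌊α⌋ ⌈β⌉, g (k : ℝ))
        ≤ g (a : ℝ) + ∫ t in (a : ℝ)..(b : ℝ), g t := by
      rw [hS, hSa, hban]; linarith
    have hS2 : (∫ t in (a : ℝ)..(b : ℝ), g t) + g ((b : ℝ))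
        ≤ ∑ k ∈ Finset.Ioo ⌊α⌋ ⌈β⌉, g (k : ℝ) := by
      rw [hS, hSb, hban]; linarith
    rw [abs_le]
    constructor
    · -- lower bound: S - I ≥ (1 - (β - b)) g b - (a - α) g α
      have k1 := small1 (c := 1 - (β - (b : ℝ))) (x := -g ((b : ℝ))) (y := |g β|)
        (by linarith) (by linarith) (by linarith [neg_le_abs (g β)]) (abs_nonneg _)
      have k2 := small1 (c := (a : ℝ) - α) (x := g α) (y := |g α|)
        (by linarith) (by linarith) (le_abs_self _) (abs_nonneg _)
      nlinarith
    · -- upper bound: S - I ≤ (1 - (a - α)) g a - (β - b) g β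
      have k1 := small1 (c := 1 - ((a : ℝ) - α)) (x := g ((a : ℝ))) (y := |g α|)
        (by linarith) (by linarith) (by linarith [le_abs_self (g α)]) (abs_nonneg _)
      have k2 := small1 (c := β - (b : ℝ)) (x := -g β) (y := |g β|)
        (by linarith) (by linarith) (neg_le_abs _) (abs_nonneg _)
      nlinarith

theorem integral_approx_monotone (m q p : ℝ) (hm : 0 < m) (hq : 0 < q) (hp : 0 < p)
    (hmq : m < q) (f : ℝ → ℝ)
    (hf : AntitoneOn f (Set.Icc ((m - 1) / p) ((q + 1) / p))) :
    |(∑ ℓ ∈ (Finset.Ioo ⌊m⌋ ⌈q⌉).filter (fun ℓ => Even ℓ), f ((ℓ : ℝ) / p)) -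
        (p / 2) * ∫ t in (m / p)..(q / p), f t| ≤ |f (m / p)| + |f (q / p)| ∧
    |(∑ ℓ ∈ (Finset.Ioo ⌊m⌋ ⌈q⌉).filter (fun ℓ => Odd ℓ), f ((ℓ : ℝ) / p)) -
        (p / 2) * ∫ t in (m / p)..(q / p), f t| ≤ |f (m / p)| + |f (q / p)| := by
  have hp' : p ≠ 0 := hp.ne'
  have hc : (2 : ℝ) / p ≠ 0 := by positivity
  constructor
  · -- even case
    set g : ℝ → ℝ := fun t => f (2 / p * t) with hgdef
    have e1 : 2 / p * (m / 2) = m / p := by field_simp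
    have e2 : 2 / p * (q / 2) = q / p := by field_simp
    have hαβ : m / 2 < q / 2 := by linarith
    have hgant : AntitoneOn g (Set.Icc (m / 2) (q / 2)) := by
      intro x hx y hy hxy
      simp only [hgdef]
      apply hf
      · refine ⟨?_, ?_⟩
        · rw [show (2:ℝ) / p * x = (2 * x) / p by ring, div_le_div_iff₀ hp hp]
          nlinarith [hx.1]
        · rw [show (2:ℝ) / p * x = (2 * x) / p by ring, div_le_div_iff₀ hp hp]
          nlinarith [hx.2]
      · refine ⟨?_, ?_⟩
        · rw [show (2:ℝ) / p * y = (2 * y) / p by ring, div_le_div_iff₀ hp hp]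
          nlinarith [hy.1]
        · rw [show (2:ℝ) / p * y = (2 * y) / p by ring, div_le_div_iff₀ hp hp]
          nlinarith [hy.2]
      · exact mul_le_mul_of_nonneg_left hxy (le_of_lt (by positivity : (0:ℝ) < 2 / p))
    have key := key_aux (m / 2) (q / 2) hαβ g hgant
    have hsum : (∑ ℓ ∈ (Finset.Ioo ⌊m⌋ ⌈q⌉).filter (fun ℓ => Even ℓ), f ((ℓ : ℝ) / p))
        = ∑ k ∈ Finset.Ioo ⌊m/2⌋ ⌈q/2⌉, g (k : ℝ) := by
      refine Finset.sum_nbij' (fun ℓ => ℓ / 2) (fun k => 2 * k) ?_ ?_ ?_ ?_ ?_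
      · intro ℓ hℓ
        simp only [Finset.mem_filter, Finset.mem_Ioo] at hℓ
        obtain ⟨⟨h1, h2⟩, c, hc'⟩ := hℓ
        have h4 : ℓ / 2 = c := by omega
        have h5 : (ℓ : ℝ) = 2 * c := by exact_mod_cast (by omega : ℓ = 2 * c)
        rw [Int.floor_lt] at h1
        rw [Int.lt_ceil] at h2
        rw [h5] at h1 h2
        simp only [Finset.mem_Ioo, h4]
        exact ⟨Int.floor_lt.2 (by push_cast; linarith), Int.lt_ceil.2 (by push_cast; linarith)⟩
      · intro k hk
        simp only [Finset.mem_Ioo] at hk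
        obtain ⟨h1, h2⟩ := hk
        rw [Int.floor_lt] at h1
        rw [Int.lt_ceil] at h2
        simp only [Finset.mem_filter, Finset.mem_Ioo]
        refine ⟨⟨?_, ?_⟩, ⟨k, by ring⟩⟩
        · rw [Int.floor_lt]; push_cast; linarith
        · rw [Int.lt_ceil]; push_cast; linarith
      · intro ℓ hℓ
        simp only [Finset.mem_filter] at hℓ
        obtain ⟨c, hc'⟩ := hℓ.2
        show 2 * (ℓ / 2) = ℓ
        omega
      · intro k _
        show 2 * k / 2 = k
        omega
      · intro ℓ hℓ
        simp only [Finset.mem_filter] at hℓ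
        obtain ⟨c, hc'⟩ := hℓ.2
        have h4 : ℓ / 2 = c := by omega
        have h5 : (ℓ : ℝ) = 2 * c := by exact_mod_cast (by omega : ℓ = 2 * c)
        simp only [hgdef, h4]
        rw [h5]
        congr 1
        field_simp
    have hintval : (∫ t in (m/2)..(q/2), g t) = (p / 2) * ∫ t in (m / p)..(q / p), f t := by
      simp only [hgdef]
      rw [intervalIntegral.integral_comp_mul_left f hc, e1, e2, smul_eq_mul]
      congr 1
      rw [inv_div]
    have egα : g (m / 2) = f (m / p) := by simp only [hgdef]; rw [e1]
    have egβ : g (q / 2) = f (q / p) := by simp only [hgdef]; rw [e2]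
    rw [hsum, ← hintval, ← egα, ← egβ]
    exact key
  · -- odd case
    set g : ℝ → ℝ := fun t => f (2 / p * t + 1 / p) with hgdef
    have e1 : 2 / p * ((m - 1) / 2) + 1 / p = m / p := by field_simp; ring
    have e2 : 2 / p * ((q - 1) / 2) + 1 / p = q / p := by field_simp; ring
    have hαβ : (m - 1) / 2 < (q - 1) / 2 := by linarith
    have hgant : AntitoneOn g (Set.Icc ((m - 1) / 2) ((q - 1) / 2)) := by
      intro x hx y hy hxy
      simp only [hgdef]
      apply hf
      · refine ⟨?_, ?_⟩
        · rw [show (2:ℝ) / p * x + 1 / p = (2 * x + 1) / p by ring, div_le_div_iff₀ hp hp]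
          nlinarith [hx.1]
        · rw [show (2:ℝ) / p * x + 1 / p = (2 * x + 1) / p by ring, div_le_div_iff₀ hp hp]
          nlinarith [hx.2]
      · refine ⟨?_, ?_⟩
        · rw [show (2:ℝ) / p * y + 1 / p = (2 * y + 1) / p by ring, div_le_div_iff₀ hp hp]
          nlinarith [hy.1]
        · rw [show (2:ℝ) / p * y + 1 / p = (2 * y + 1) / p by ring, div_le_div_iff₀ hp hp]
          nlinarith [hy.2]
      · have := mul_le_mul_of_nonneg_left hxy (le_of_lt (by positivity : (0:ℝ) < 2 / p))
        linarith
    have key := key_aux ((m - 1) / 2) ((q - 1) / 2) hαβ g hgant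
    have hsum : (∑ ℓ ∈ (Finset.Ioo ⌊m⌋ ⌈q⌉).filter (fun ℓ => Odd ℓ), f ((ℓ : ℝ) / p))
        = ∑ k ∈ Finset.Ioo ⌊(m-1)/2⌋ ⌈(q-1)/2⌉, g (k : ℝ) := by
      refine Finset.sum_nbij' (fun ℓ => ℓ / 2) (fun k => 2 * k + 1) ?_ ?_ ?_ ?_ ?_
      · intro ℓ hℓ
        simp only [Finset.mem_filter, Finset.mem_Ioo] at hℓ
        obtain ⟨⟨h1, h2⟩, c, hc'⟩ := hℓ
        have h4 : ℓ / 2 = c := by omega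
        have h5 : (ℓ : ℝ) = 2 * c + 1 := by exact_mod_cast (by omega : ℓ = 2 * c + 1)
        rw [Int.floor_lt] at h1
        rw [Int.lt_ceil] at h2
        rw [h5] at h1 h2
        simp only [Finset.mem_Ioo, h4]
        exact ⟨Int.floor_lt.2 (by push_cast; linarith), Int.lt_ceil.2 (by push_cast; linarith)⟩
      · intro k hk
        simp only [Finset.mem_Ioo] at hk
        obtain ⟨h1, h2⟩ := hk
        rw [Int.floor_lt] at h1
        rw [Int.lt_ceil] at h2
        simp only [Finset.mem_filter, Finset.mem_Ioo]
        refine ⟨⟨?_, ?_⟩, ⟨k, by ring⟩⟩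
        · rw [Int.floor_lt]; push_cast; linarith
        · rw [Int.lt_ceil]; push_cast; linarith
      · intro ℓ hℓ
        simp only [Finset.mem_filter] at hℓ
        obtain ⟨c, hc'⟩ := hℓ.2
        show 2 * (ℓ / 2) + 1 = ℓ
        omega
      · intro k _
        show (2 * k + 1) / 2 = k
        omega
      · intro ℓ hℓ
        simp only [Finset.mem_filter] at hℓ
        obtain ⟨c, hc'⟩ := hℓ.2
        have h4 : ℓ / 2 = c := by omega
        have h5 : (ℓ : ℝ) = 2 * c + 1 := by exact_mod_cast (by omega : ℓ = 2 * c + 1)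
        simp only [hgdef, h4]
        rw [h5]
        congr 1
        field_simp
    have hintval : (∫ t in ((m-1)/2)..((q-1)/2), g t)
        = (p / 2) * ∫ t in (m / p)..(q / p), f t := by
      simp only [hgdef]
      rw [intervalIntegral.integral_comp_mul_add f hc (1 / p), e1, e2, smul_eq_mul]
      congr 1
      rw [inv_div]
    have egα : g ((m-1) / 2) = f (m / p) := by simp only [hgdef]; rw [e1]
    have egβ : g ((q-1) / 2) = f (q / p) := by simp only [hgdef]; rw [e2]
    rw [hsum, ← hintval, ← egα, ← egβ]
    exact key
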